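/- Let μ ∈ 𝒫(ℝ) have support bounds −∞ ≤ a_μ < b_μ ≤ ∞ and mean λ = ∫ x μ(dx). Let 𝐊ⁿ = {a_μ < K^n_1 < … < K^n_{m_n} < b_μ} be a finite set of strikes with mesh Δ𝐊ⁿ := max_{2≤i≤m_n}(K^n_i − K^n_{i−1}). Then for any μⁿ ∈ 𝒫(ℝ) with ∫ x μⁿ(dx) = λ and C_{μⁿ}(K^n_i) = C_μ(K^n_i) for i = 1,…,m_n, one has (1/2) 𝒲₁(μⁿ, μ) ≤ Δ𝐊ⁿ + K^n_1 − λ + C_μ(K^n_1) + C_μ(K^n_{m_n}). In particular, if Δ𝐊ⁿ → 0, K^n_1 → a_μ and K^n_{m_n} → b_μ as n → ∞, then 𝒲₁(μⁿ, μ) → 0. -/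

import Mathlib

open MeasureTheory Filter Set ProbabilityTheory
open scoped ENNReal

namespace MMOT

/-- Call price `C_μ(K) = ∫ (x − K)⁺ μ(dx)`. -/
noncomputable def callPrice (μ : Measure ℝ) (K : ℝ) : ℝ :=
  ∫ x, max (x - K) 0 ∂μ

/-- Wasserstein-1 distance on probability measures on `ℝ`. -/
noncomputable def W1R (μ ν : Measure ℝ) : ℝ :=
  sInf {r | ∃ γ : Measure (ℝ × ℝ), IsProbabilityMeasure γ ∧ γ.map Prod.fst = μ ∧
    γ.map Prod.snd = ν ∧ Integrable (fun p => |p.1 - p.2|) γ ∧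
    r = ∫ p, |p.1 - p.2| ∂γ}

/-- Topological support of a measure on `ℝ`. -/
def msupport (μ : Measure ℝ) : Set ℝ :=
  {x | ∀ ε > 0, 0 < μ (Set.Ioo (x - ε) (x + ε))}

/-- Lower support bound `a_μ ∈ [−∞,∞]`. -/
noncomputable def suppInf (μ : Measure ℝ) : EReal :=
  sInf ((fun x : ℝ => (x : EReal)) '' msupport μ)

/-- Upper support bound `b_μ ∈ [−∞,∞]`. -/
noncomputable def suppSup (μ : Measure ℝ) : EReal :=
  sSup ((fun x : ℝ => (x : EReal)) '' msupport μ)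

section auxA
variable {ρ : Measure ℝ}
noncomputable def putPrice (μ : Measure ℝ) (K : ℝ) : ℝ :=
  ∫ x, max (K - x) 0 ∂μ

variable {ρ : Measure ℝ}

lemma integrable_call [IsProbabilityMeasure ρ] (h : Integrable (fun x : ℝ => x) ρ) (K : ℝ) :
    Integrable (fun x => max (x - K) 0) ρ := by
  have h1 : Integrable (fun x : ℝ => x - K) ρ := h.sub (integrable_const K)
  refine h1.mono ?_ ?_
  · exact (continuous_id.sub continuous_const).max continuous_const |>.aestronglyMeasurable
  · filter_upwards with x
    simp only [Real.norm_eq_abs]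
    rcases le_total (x - K) 0 with h' | h' <;>
      [skip; skip] <;> rw [abs_le] <;>
      constructor <;>
      simp [max_eq_left, max_eq_right, h'] <;>
      linarith [le_abs_self (x-K), neg_abs_le (x-K), abs_nonneg (x-K)]

lemma integrable_put [IsProbabilityMeasure ρ] (h : Integrable (fun x : ℝ => x) ρ) (K : ℝ) :
    Integrable (fun x => max (K - x) 0) ρ := by
  have h1 : Integrable (fun x : ℝ => K - x) ρ := (integrable_const K).sub h
  refine h1.mono ?_ ?_
  · exact (continuous_const.sub continuous_id).max continuous_const |>.aestronglyMeasurable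
  · filter_upwards with x
    simp only [Real.norm_eq_abs]
    rcases le_total (K - x) 0 with h' | h' <;>
      [skip; skip] <;> rw [abs_le] <;>
      constructor <;>
      simp [max_eq_left, max_eq_right, h'] <;>
      linarith [le_abs_self (K-x), neg_abs_le (K-x), abs_nonneg (K-x)]

lemma put_call_parity [IsProbabilityMeasure ρ] (h : Integrable (fun x : ℝ => x) ρ) (K : ℝ) :
    putPrice ρ K = callPrice ρ K + K - ∫ x, x ∂ρ := by
  have h3 : putPrice ρ K - callPrice ρ K = ∫ x, (K - x) ∂ρ := by
    unfold putPrice callPrice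
    rw [← integral_sub (integrable_put h K) (integrable_call h K)]
    refine integral_congr_ae (Filter.Eventually.of_forall fun x => ?_)
    rcases le_total x K with h' | h' <;>
      simp [max_eq_left, max_eq_right, sub_nonpos.2 h', sub_nonneg.2 h'] <;> ring
  have h4 : ∫ x, (K - x) ∂ρ = K - ∫ x, x ∂ρ := by
    rw [integral_sub (integrable_const K) h]; simp
  linarith [h3, h4]

lemma callPrice_nonneg (K : ℝ) : 0 ≤ callPrice ρ K :=
  integral_nonneg fun x => le_max_right _ _

lemma putPrice_nonneg (K : ℝ) : 0 ≤ putPrice ρ K :=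
  integral_nonneg fun x => le_max_right _ _

lemma lint_call [IsProbabilityMeasure ρ] (h : Integrable (fun x : ℝ => x) ρ) (K : ℝ) :
    ∫⁻ t in Ioi K, ρ (Ioi t) = ENNReal.ofReal (callPrice ρ K) := by
  have meas : Measurable fun p : ℝ × ℝ => (Ioi p.1).indicator (fun _ => (1:ℝ≥0∞)) p.2 := by
    have : (fun p : ℝ × ℝ => (Ioi p.1).indicator (fun _ => (1:ℝ≥0∞)) p.2)
        = Set.indicator {p : ℝ × ℝ | p.1 < p.2} (fun _ => 1) := by
      ext p; by_cases hp : p.1 < p.2 <;> simp [Set.indicator, hp]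
    rw [this]
    exact measurable_const.indicator (isOpen_lt continuous_fst continuous_snd).measurableSet
  calc ∫⁻ t in Ioi K, ρ (Ioi t)
      = ∫⁻ t in Ioi K, ∫⁻ x, (Ioi t).indicator (fun _ => 1) x ∂ρ := by
        refine lintegral_congr fun t => ?_
        rw [lintegral_indicator measurableSet_Ioi]; simp
    _ = ∫⁻ x, (∫⁻ t in Ioi K, (Ioi t).indicator (fun _ => 1) x) ∂ρ := by
        exact lintegral_lintegral_swap (μ := volume.restrict (Ioi K)) (ν := ρ)
          (f := fun t x => (Ioi t).indicator (fun _ => 1) x)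
          meas.aemeasurable
    _ = ∫⁻ x, ENNReal.ofReal (max (x - K) 0) ∂ρ := by
        refine lintegral_congr fun x => ?_
        have : ∀ t, (Ioi t).indicator (fun _ => (1:ℝ≥0∞)) x = (Iio x).indicator (fun _ => 1) t := by
          intro t; by_cases h' : t < x <;> simp [Set.indicator, h', mem_Ioi, mem_Iio]
        simp_rw [this]
        rw [lintegral_indicator measurableSet_Iio, setLIntegral_one,
          Measure.restrict_apply measurableSet_Iio]
        rw [show Iio x ∩ Ioi K = Ioo K x by ext y; simp [mem_Ioo, mem_Iio, mem_Ioi, and_comm]]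
        rcases le_total x K with h' | h'
        · simp [Ioo_eq_empty_of_le h', ENNReal.ofReal_eq_zero, max_eq_right, sub_nonpos.2 h']
        · simp [Real.volume_Ioo, max_eq_left, sub_nonneg.2 h']
    _ = ENNReal.ofReal (callPrice ρ K) := by
        rw [← ofReal_integral_eq_lintegral_ofReal (integrable_call h K)
          (Filter.Eventually.of_forall fun x => le_max_right _ _)]
        rfl

lemma lint_put [IsProbabilityMeasure ρ] (h : Integrable (fun x : ℝ => x) ρ) (K : ℝ) :
    ∫⁻ t in Iic K, ρ (Iic t) = ENNReal.ofReal (putPrice ρ K) := by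
  have meas : Measurable fun p : ℝ × ℝ => (Iic p.1).indicator (fun _ => (1:ℝ≥0∞)) p.2 := by
    have : (fun p : ℝ × ℝ => (Iic p.1).indicator (fun _ => (1:ℝ≥0∞)) p.2)
        = Set.indicator {p : ℝ × ℝ | p.2 ≤ p.1} (fun _ => 1) := by
      ext p; by_cases hp : p.2 ≤ p.1 <;> simp [Set.indicator, hp]
    rw [this]
    exact measurable_const.indicator (isClosed_le continuous_snd continuous_fst).measurableSet
  calc ∫⁻ t in Iic K, ρ (Iic t)
      = ∫⁻ t in Iic K, ∫⁻ x, (Iic t).indicator (fun _ => 1) x ∂ρ := by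
        refine lintegral_congr fun t => ?_
        rw [lintegral_indicator measurableSet_Iic]; simp
    _ = ∫⁻ x, (∫⁻ t in Iic K, (Iic t).indicator (fun _ => 1) x) ∂ρ := by
        exact lintegral_lintegral_swap (μ := volume.restrict (Iic K)) (ν := ρ)
          (f := fun t x => (Iic t).indicator (fun _ => 1) x)
          meas.aemeasurable
    _ = ∫⁻ x, ENNReal.ofReal (max (K - x) 0) ∂ρ := by
        refine lintegral_congr fun x => ?_
        have : ∀ t, (Iic t).indicator (fun _ => (1:ℝ≥0∞)) x = (Ici x).indicator (fun _ => 1) t := by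
          intro t; by_cases h' : x ≤ t <;> simp [Set.indicator, h', mem_Iic, mem_Ici]
        simp_rw [this]
        rw [lintegral_indicator measurableSet_Ici, setLIntegral_one,
          Measure.restrict_apply measurableSet_Ici]
        rw [show Ici x ∩ Iic K = Icc x K by rfl]
        rcases le_total K x with h' | h'
        · rcases eq_or_lt_of_le h' with h'' | h''
          · simp [← h'', Real.volume_Icc]
          · simp [Icc_eq_empty_of_lt h'', ENNReal.ofReal_eq_zero, max_eq_right,
              sub_nonpos.2 h']
        · simp [Real.volume_Icc, max_eq_left, sub_nonneg.2 h']
    _ = ENNReal.ofReal (putPrice ρ K) := by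
        rw [← ofReal_integral_eq_lintegral_ofReal (integrable_put h K)
          (Filter.Eventually.of_forall fun x => le_max_right _ _)]
        rfl


end auxA

section auxC
variable {ρ : Measure ℝ}
noncomputable def quant (ρ : Measure ℝ) (u : ℝ) : ℝ :=
  if 0 < u ∧ u < 1 then sInf {x | u ≤ cdf ρ x} else 0

lemma quantS_nonempty [IsProbabilityMeasure ρ] {u : ℝ} (h1 : u < 1) :
    {x | u ≤ cdf ρ x}.Nonempty := by
  have := (tendsto_cdf_atTop ρ).eventually_const_le h1
  exact this.exists

lemma quantS_bdd [IsProbabilityMeasure ρ] {u : ℝ} (h0 : 0 < u) :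
    BddBelow {x | u ≤ cdf ρ x} := by
  have := (tendsto_cdf_atBot ρ).eventually_lt_const h0
  rw [eventually_atBot] at this
  obtain ⟨x₀, hx₀⟩ := this
  refine ⟨x₀, fun x hx => ?_⟩
  by_contra hc
  push_neg at hc
  exact absurd hx (not_le.2 (hx₀ x hc.le))

lemma le_cdf_csInf [IsProbabilityMeasure ρ] {u : ℝ} (h0 : 0 < u) (h1 : u < 1) :
    u ≤ cdf ρ (sInf {x | u ≤ cdf ρ x}) := by
  set S := {x | u ≤ cdf ρ x} with hS
  set q := sInf S with hq
  by_contra hc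
  push_neg at hc
  have hrc : ContinuousWithinAt (cdf ρ) (Ici q) q := (cdf ρ).right_continuous q
  have hev : ∀ᶠ x in nhdsWithin q (Ici q), cdf ρ x < u :=
    hrc.eventually_lt (tendsto_const_nhds) hc
  rw [eventually_iff, mem_nhdsGE_iff_exists_Ico_subset] at hev
  obtain ⟨b, hb, hsub⟩ := hev
  obtain ⟨x, hxS, hxb⟩ := (csInf_lt_iff (quantS_bdd h0) (quantS_nonempty h1)).1 hb
  have hqx : q ≤ x := csInf_le (quantS_bdd h0) hxS
  have : cdf ρ x < u := hsub ⟨hqx, hxb⟩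
  exact absurd hxS (not_le.2 this)

lemma quant_le_iff [IsProbabilityMeasure ρ] {u t : ℝ} (h0 : 0 < u) (h1 : u < 1) :
    quant ρ u ≤ t ↔ u ≤ cdf ρ t := by
  rw [quant, if_pos ⟨h0, h1⟩]
  constructor
  · intro h
    exact le_trans (le_cdf_csInf h0 h1) (monotone_cdf ρ h)
  · intro h
    exact csInf_le (quantS_bdd h0) h

lemma measurable_quant [IsProbabilityMeasure ρ] : Measurable (quant ρ) := by
  apply measurable_of_Iic
  intro t
  by_cases ht : (0:ℝ) ≤ t
  · have : quant ρ ⁻¹' Iic t = (Ioo 0 1 ∩ Iic (cdf ρ t)) ∪ (Ioo (0:ℝ) 1)ᶜ := by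
      ext u
      by_cases hu : 0 < u ∧ u < 1
      · simp only [mem_preimage, mem_Iic, mem_union, mem_inter_iff, mem_Ioo, mem_compl_iff]
        rw [quant_le_iff hu.1 hu.2]
        simp [hu.1, hu.2]
      · simp only [mem_preimage, mem_Iic, mem_union, mem_inter_iff, mem_Ioo, mem_compl_iff]
        have : quant ρ u = 0 := by rw [quant, if_neg hu]
        simp [this, ht, hu]
    rw [this]
    exact ((measurableSet_Ioo.inter measurableSet_Iic).union measurableSet_Ioo.compl)
  · have : quant ρ ⁻¹' Iic t = Ioo 0 1 ∩ Iic (cdf ρ t) := by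
      ext u
      by_cases hu : 0 < u ∧ u < 1
      · simp only [mem_preimage, mem_Iic, mem_inter_iff, mem_Ioo]
        rw [quant_le_iff hu.1 hu.2]
        simp [hu.1, hu.2]
      · simp only [mem_preimage, mem_Iic, mem_inter_iff, mem_Ioo]
        have : quant ρ u = 0 := by rw [quant, if_neg hu]
        simp [this, ht, hu]
    rw [this]
    exact measurableSet_Ioo.inter measurableSet_Iic
  
lemma vol_Iic_inter {c : ℝ} (h0 : 0 ≤ c) (h1 : c ≤ 1) :
    volume (Iic c ∩ Ioo 0 1) = ENNReal.ofReal c := by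
  rcases lt_or_eq_of_le h1 with h1' | h1'
  · have : Iic c ∩ Ioo 0 1 = Ioc 0 c := by
      ext x; simp only [mem_inter_iff, mem_Iic, mem_Ioo, mem_Ioc]
      constructor
      · rintro ⟨h, h', _⟩; exact ⟨h', h⟩
      · rintro ⟨h, h'⟩; exact ⟨h', h, lt_of_le_of_lt h' h1'⟩
    rw [this, Real.volume_Ioc]; norm_num
  · subst h1'
    have : Iic (1:ℝ) ∩ Ioo 0 1 = Ioo 0 1 := by
      apply inter_eq_self_of_subset_right
      intro x hx; exact le_of_lt hx.2
    rw [this, Real.volume_Ioo]; norm_num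

lemma quant_preimage_Iic [IsProbabilityMeasure ρ] (t : ℝ) :
    quant ρ ⁻¹' Iic t ∩ Ioo 0 1 = Iic (cdf ρ t) ∩ Ioo 0 1 := by
  ext u
  simp only [mem_inter_iff, mem_preimage, mem_Iic, mem_Ioo, and_congr_left_iff]
  intro hu
  rw [quant_le_iff hu.1 hu.2]

lemma map_quant [IsProbabilityMeasure ρ] :
    Measure.map (quant ρ) (volume.restrict (Ioo 0 1)) = ρ := by
  refine Measure.ext_of_Iic _ _ fun t => ?_
  rw [Measure.map_apply measurable_quant measurableSet_Iic,
    Measure.restrict_apply (measurable_quant measurableSet_Iic),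
    quant_preimage_Iic, vol_Iic_inter (cdf_nonneg ρ t) (cdf_le_one ρ t)]
  exact ofReal_cdf ρ t

instance : IsProbabilityMeasure (volume.restrict (Ioo (0:ℝ) 1)) := by
  constructor
  rw [Measure.restrict_apply MeasurableSet.univ, univ_inter, Real.volume_Ioo]
  norm_num


end auxC

section auxD
lemma vol_symmdiff_Ici (a b : ℝ) :
    volume ((Ici a \ Ici b) ∪ (Ici b \ Ici a)) = ENNReal.ofReal |a - b| := by
  wlog hab : a ≤ b generalizing a b
  · rw [union_comm, this b a (le_of_not_ge hab), abs_sub_comm]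
  have h1 : Ici a \ Ici b = Ico a b := by
    ext x; simp [mem_diff, mem_Ici, mem_Ico, not_le]
  have h2 : Ici b \ Ici a = ∅ := by
    ext x; simp only [mem_diff, mem_Ici, not_le, mem_empty_iff_false, iff_false, not_and]
    intro h; linarith
  rw [h1, h2, union_empty, Real.volume_Ico, abs_of_nonpos (by linarith), neg_sub]

lemma vol_Ioc_inter {a b : ℝ} (h0 : 0 ≤ a) (hab : a ≤ b) (h1 : b ≤ 1) :
    volume (Ioc a b ∩ Ioo 0 1) = ENNReal.ofReal (b - a) := by
  rcases lt_or_eq_of_le h1 with h1' | h1'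
  · have : Ioc a b ∩ Ioo 0 1 = Ioc a b := by
      apply inter_eq_self_of_subset_left
      intro x hx
      exact ⟨lt_of_le_of_lt h0 hx.1, lt_of_le_of_lt hx.2 h1'⟩
    rw [this, Real.volume_Ioc]
  · subst h1'
    have : Ioc a 1 ∩ Ioo 0 1 = Ioo a 1 := by
      ext x
      simp only [mem_inter_iff, mem_Ioc, mem_Ioo]
      constructor
      · rintro ⟨⟨h, _⟩, _, h''⟩; exact ⟨h, h''⟩
      · rintro ⟨h, h'⟩; exact ⟨⟨h, h'.le⟩, lt_of_le_of_lt h0 h, h'⟩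
    rw [this, Real.volume_Ioo]

lemma vol_symmdiff_Iic_inter {a b : ℝ} (ha : 0 ≤ a) (ha1 : a ≤ 1) (hb : 0 ≤ b) (hb1 : b ≤ 1) :
    volume (((Iic a \ Iic b) ∪ (Iic b \ Iic a)) ∩ Ioo 0 1) = ENNReal.ofReal |a - b| := by
  wlog hab : b ≤ a generalizing a b
  · rw [union_comm, abs_sub_comm]
    exact this hb hb1 ha ha1 (le_of_not_ge hab)
  have h1 : Iic a \ Iic b = Ioc b a := by
    ext x; simp [mem_diff, mem_Iic, mem_Ioc, not_le, and_comm]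
  have h2 : Iic b \ Iic a = ∅ := by
    ext x; simp only [mem_diff, mem_Iic, not_le, mem_empty_iff_false, iff_false, not_and]
    intro h; linarith
  rw [h1, h2, union_empty, vol_Ioc_inter hb hab ha1, abs_of_nonneg (by linarith)]

section coupling
variable (ν μ : Measure ℝ) [IsProbabilityMeasure ν] [IsProbabilityMeasure μ]

lemma lint_quant_eq :
    ∫⁻ u in Ioo 0 1, ENNReal.ofReal |quant ν u - quant μ u| =
      ∫⁻ t, ENNReal.ofReal |cdf ν t - cdf μ t| := by
  set A : Set (ℝ × ℝ) := {p | quant ν p.1 ≤ p.2} with hA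
  set B : Set (ℝ × ℝ) := {p | quant μ p.1 ≤ p.2} with hB
  have measA : MeasurableSet A := by
    have : A = (fun p : ℝ × ℝ => quant ν p.1 - p.2) ⁻¹' Iic 0 := by
      ext p; simp [hA, sub_nonpos]
    rw [this]
    exact ((measurable_quant.comp measurable_fst).sub measurable_snd) measurableSet_Iic
  have measB : MeasurableSet B := by
    have : B = (fun p : ℝ × ℝ => quant μ p.1 - p.2) ⁻¹' Iic 0 := by
      ext p; simp [hB, sub_nonpos]
    rw [this]
    exact ((measurable_quant.comp measurable_fst).sub measurable_snd) measurableSet_Iic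
  set E := (A \ B) ∪ (B \ A) with hE
  have measE : MeasurableSet E := (measA.diff measB).union (measB.diff measA)
  have left : ∫⁻ u in Ioo 0 1, ENNReal.ofReal |quant ν u - quant μ u| =
      ((volume.restrict (Ioo 0 1)).prod volume) E := by
    rw [Measure.prod_apply measE]
    refine (lintegral_congr fun u => ?_).symm
    have hslice : Prod.mk u ⁻¹' E =
        (Ici (quant ν u) \ Ici (quant μ u)) ∪ (Ici (quant μ u) \ Ici (quant ν u)) := by
      ext t
      simp [hE, hA, hB, mem_preimage, mem_union, mem_diff, mem_Ici]
    rw [hslice, vol_symmdiff_Ici]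
  have right : ((volume.restrict (Ioo 0 1)).prod volume) E =
      ∫⁻ t, ENNReal.ofReal |cdf ν t - cdf μ t| := by
    rw [Measure.prod_apply_symm measE]
    refine lintegral_congr fun t => ?_
    have hmeas_slice : MeasurableSet ((fun u => (u, t)) ⁻¹' E) :=
      measE.preimage (measurable_id.prodMk measurable_const)
    rw [Measure.restrict_apply hmeas_slice]
    have hslice : ((fun u => (u, t)) ⁻¹' E) ∩ Ioo 0 1 =
        ((Iic (cdf ν t) \ Iic (cdf μ t)) ∪ (Iic (cdf μ t) \ Iic (cdf ν t))) ∩ Ioo 0 1 := by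
      ext u
      simp only [mem_inter_iff, mem_preimage, hE, hA, hB, mem_union, mem_diff, mem_setOf_eq,
        mem_Iic, mem_Ioo, and_congr_left_iff]
      intro hu
      rw [quant_le_iff hu.1 hu.2, quant_le_iff hu.1 hu.2]
    rw [hslice, vol_symmdiff_Iic_inter (cdf_nonneg ν t) (cdf_le_one ν t)
      (cdf_nonneg μ t) (cdf_le_one μ t)]
  rw [left, right]

lemma W1R_le {B : ℝ} (hB : 0 ≤ B)
    (hbound : ∫⁻ t, ENNReal.ofReal |cdf ν t - cdf μ t| ≤ ENNReal.ofReal B) :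
    W1R ν μ ≤ B := by
  set P := volume.restrict (Ioo (0:ℝ) 1) with hP
  have hfin : ∫⁻ u in Ioo 0 1, ENNReal.ofReal |quant ν u - quant μ u| ≤ ENNReal.ofReal B := by
    rw [lint_quant_eq ν μ]; exact hbound
  have mq : Measurable fun u => (quant ν u, quant μ u) :=
    measurable_quant.prodMk measurable_quant
  have mabs : Measurable fun u => |quant ν u - quant μ u| :=
    (measurable_quant.sub measurable_quant).abs
  have hint : Integrable (fun u => |quant ν u - quant μ u|) P := by
    constructor
    · exact mabs.aestronglyMeasurable
    · rw [hasFiniteIntegral_iff_ofReal (Filter.Eventually.of_forall fun u => abs_nonneg _)]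
      exact lt_of_le_of_lt hfin ENNReal.ofReal_lt_top
  have hr : ∫ u, |quant ν u - quant μ u| ∂P =
      (∫⁻ u, ENNReal.ofReal |quant ν u - quant μ u| ∂P).toReal := by
    rw [integral_eq_lintegral_of_nonneg_ae (Filter.Eventually.of_forall fun u => abs_nonneg _)
      mabs.aestronglyMeasurable]
  have hrB : ∫ u, |quant ν u - quant μ u| ∂P ≤ B := by
    rw [hr]
    exact ENNReal.toReal_le_of_le_ofReal hB hfin
  set γ := Measure.map (fun u => (quant ν u, quant μ u)) P with hγ
  have habs : AEStronglyMeasurable (fun p : ℝ × ℝ => |p.1 - p.2|) γ :=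
    ((continuous_fst.sub continuous_snd).abs).aestronglyMeasurable
  have hmem : (∫ u, |quant ν u - quant μ u| ∂P) ∈
      {r | ∃ γ : Measure (ℝ × ℝ), IsProbabilityMeasure γ ∧ γ.map Prod.fst = ν ∧
        γ.map Prod.snd = μ ∧ Integrable (fun p => |p.1 - p.2|) γ ∧
        r = ∫ p, |p.1 - p.2| ∂γ} := by
    refine ⟨γ, ?_, ?_, ?_, ?_, ?_⟩
    · exact Measure.isProbabilityMeasure_map mq.aemeasurable
    · rw [hγ, Measure.map_map measurable_fst mq]
      exact map_quant
    · rw [hγ, Measure.map_map measurable_snd mq]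
      exact map_quant
    · rw [hγ, integrable_map_measure habs mq.aemeasurable]
      exact hint
    · rw [hγ, integral_map mq.aemeasurable habs]
  refine le_trans (csInf_le ⟨0, fun r hr' => ?_⟩ hmem) hrB
  obtain ⟨γ', _, _, _, hint', hr'⟩ := hr'
  rw [hr']
  exact integral_nonneg fun p => abs_nonneg _

end coupling

end auxD

section auxE
variable {ρ : Measure ℝ}
/-! survival function -/

noncomputable def surv (ρ : Measure ℝ) (t : ℝ) : ℝ := (ρ (Ioi t)).toReal

lemma ofReal_surv (t : ℝ) [IsFiniteMeasure ρ] : ENNReal.ofReal (surv ρ t) = ρ (Ioi t) :=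
  ENNReal.ofReal_toReal (measure_ne_top _ _)

lemma surv_eq [IsProbabilityMeasure ρ] (t : ℝ) : surv ρ t = 1 - cdf ρ t := by
  have h1 : ρ (Iic t) + ρ (Ioi t) = 1 := by
    rw [← measure_union (Iic_disjoint_Ioi le_rfl) measurableSet_Ioi, Iic_union_Ioi,
      measure_univ]
  have h2 : (ρ (Iic t)).toReal + (ρ (Ioi t)).toReal = 1 := by
    rw [← ENNReal.toReal_add (measure_ne_top _ _) (measure_ne_top _ _), h1]
    simp
  rw [surv, cdf_eq_real, measureReal_def]
  linarith

lemma surv_anti [IsProbabilityMeasure ρ] : Antitone (surv ρ) := by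
  intro s t hst
  exact ENNReal.toReal_le_toReal (measure_ne_top _ _) (measure_ne_top _ _) |>.2
    (measure_mono (Ioi_subset_Ioi hst))

lemma surv_nonneg (t : ℝ) : 0 ≤ surv ρ t := ENNReal.toReal_nonneg

lemma surv_le_one [IsProbabilityMeasure ρ] (t : ℝ) : surv ρ t ≤ 1 := by
  rw [surv_eq]; linarith [cdf_nonneg ρ t]

lemma meas_surv [IsProbabilityMeasure ρ] : Measurable fun t => ρ (Ioi t) := by
  have : Antitone fun t => ρ (Ioi t) := fun s t hst => measure_mono (Ioi_subset_Ioi hst)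
  exact this.measurable

lemma meas_cdfm [IsProbabilityMeasure ρ] : Measurable fun t => ρ (Iic t) := by
  have : Monotone fun t => ρ (Iic t) := fun s t hst => measure_mono (Iic_subset_Iic.2 hst)
  exact this.measurable

section twomeasures
variable (ν μ : Measure ℝ) [IsProbabilityMeasure ν] [IsProbabilityMeasure μ]

lemma cdf_diff_eq (t : ℝ) : |cdf ν t - cdf μ t| = |surv ν t - surv μ t| := by
  rw [surv_eq, surv_eq, abs_sub_comm]
  ring_nf

lemma lint_tail_right (hiν : Integrable (fun x : ℝ => x) ν) (hiμ : Integrable (fun x : ℝ => x) μ)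
    (L : ℝ) : ∫⁻ t in Ioi L, ENNReal.ofReal |cdf ν t - cdf μ t| ≤
      ENNReal.ofReal (callPrice ν L) + ENNReal.ofReal (callPrice μ L) := by
  rw [← lint_call hiν L, ← lint_call hiμ L, ← lintegral_add_left (meas_surv (ρ := ν))]
  refine setLIntegral_mono ((meas_surv.add meas_surv)) fun t _ => ?_
  rw [cdf_diff_eq, ← ofReal_surv (ρ := ν) t, ← ofReal_surv (ρ := μ) t, ← ENNReal.ofReal_add
    (surv_nonneg t) (surv_nonneg t)]
  apply ENNReal.ofReal_le_ofReal
  exact (abs_sub _ _).trans (by rw [abs_of_nonneg (surv_nonneg t), abs_of_nonneg (surv_nonneg t)])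

lemma lint_tail_left (hiν : Integrable (fun x : ℝ => x) ν) (hiμ : Integrable (fun x : ℝ => x) μ)
    (L : ℝ) : ∫⁻ t in Iic L, ENNReal.ofReal |cdf ν t - cdf μ t| ≤
      ENNReal.ofReal (putPrice ν L) + ENNReal.ofReal (putPrice μ L) := by
  rw [← lint_put hiν L, ← lint_put hiμ L, ← lintegral_add_left (meas_cdfm (ρ := ν))]
  refine setLIntegral_mono ((meas_cdfm.add meas_cdfm)) fun t _ => ?_
  rw [← ofReal_cdf ν t, ← ofReal_cdf μ t, ← ENNReal.ofReal_add (cdf_nonneg ν t) (cdf_nonneg μ t)]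
  apply ENNReal.ofReal_le_ofReal
  exact (abs_sub _ _).trans (by rw [abs_of_nonneg (cdf_nonneg ν t), abs_of_nonneg (cdf_nonneg μ t)])

lemma cell_call_split (hiρ : Integrable (fun x : ℝ => x) ρ) [IsProbabilityMeasure ρ]
    {a b : ℝ} (hab : a ≤ b) :
    (∫⁻ t in Ioc a b, ρ (Ioi t)) + ENNReal.ofReal (callPrice ρ b) = ENNReal.ofReal (callPrice ρ a) := by
  rw [← lint_call hiρ b, ← lint_call hiρ a, ← lintegral_union measurableSet_Ioi
    (Ioc_disjoint_Ioi le_rfl), Ioc_union_Ioi_eq_Ioi hab]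

lemma cell_eq (hiν : Integrable (fun x : ℝ => x) ν) (hiμ : Integrable (fun x : ℝ => x) μ)
    {a b : ℝ} (hab : a ≤ b)
    (hca : callPrice ν a = callPrice μ a) (hcb : callPrice ν b = callPrice μ b) :
    ∫⁻ t in Ioc a b, ν (Ioi t) = ∫⁻ t in Ioc a b, μ (Ioi t) := by
  have h1 := cell_call_split (ρ := ν) hiν hab
  have h2 := cell_call_split (ρ := μ) hiμ hab
  rw [hca, hcb] at h1
  rw [← h2] at h1
  exact WithTop.add_right_cancel ENNReal.ofReal_ne_top h1

lemma cross_ineq {a b : ℝ} (hab : a < b)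
    (hcell : ∫⁻ t in Ioc a b, ν (Ioi t) = ∫⁻ t in Ioc a b, μ (Ioi t)) :
    surv ν b ≤ surv μ a := by
  have l1 : ν (Ioi b) * volume (Ioc a b) ≤ ∫⁻ t in Ioc a b, ν (Ioi t) := by
    rw [← setLIntegral_const]
    exact setLIntegral_mono meas_surv fun t ht => measure_mono (Ioi_subset_Ioi ht.2)
  have l2 : ∫⁻ t in Ioc a b, μ (Ioi t) ≤ μ (Ioi a) * volume (Ioc a b) := by
    rw [← setLIntegral_const]
    exact setLIntegral_mono measurable_const fun t ht => measure_mono (Ioi_subset_Ioi ht.1.le)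
  have l3 : ν (Ioi b) * volume (Ioc a b) ≤ μ (Ioi a) * volume (Ioc a b) :=
    le_trans l1 (hcell ▸ l2)
  have hv0 : volume (Ioc a b) ≠ 0 := by
    rw [Real.volume_Ioc]
    simp only [ne_eq, ENNReal.ofReal_eq_zero, not_le]
    linarith
  have hvt : volume (Ioc a b) ≠ ⊤ := by rw [Real.volume_Ioc]; exact ENNReal.ofReal_ne_top
  have := (ENNReal.mul_le_mul_iff_left hv0 hvt).1 l3
  exact ENNReal.toReal_le_toReal (measure_ne_top _ _) (measure_ne_top _ _) |>.2 this

lemma lint_cell {a b : ℝ} (h : a < b)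
    (hcell : ∫⁻ t in Ioc a b, ν (Ioi t) = ∫⁻ t in Ioc a b, μ (Ioi t)) :
    ∫⁻ t in Ioc a b, ENNReal.ofReal |cdf ν t - cdf μ t| ≤
      ENNReal.ofReal ((b - a) * ((surv ν a - surv ν b) + (surv μ a - surv μ b))) := by
  set E := (surv ν a - surv ν b) + (surv μ a - surv μ b) with hEdef
  have c1 : surv ν b ≤ surv μ a := cross_ineq ν μ h hcell
  have c2 : surv μ b ≤ surv ν a := cross_ineq μ ν h hcell.symm
  have hE0 : 0 ≤ E := by
    have := surv_anti (ρ := ν) h.le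
    have := surv_anti (ρ := μ) h.le
    unfold E; linarith [surv_anti (ρ := ν) h.le, surv_anti (ρ := μ) h.le]
  have hpt : ∀ t ∈ Ioc a b, ENNReal.ofReal |cdf ν t - cdf μ t| ≤ ENNReal.ofReal E := by
    intro t ht
    apply ENNReal.ofReal_le_ofReal
    rw [cdf_diff_eq]
    have hν1 : surv ν t ≤ surv ν a := surv_anti ht.1.le
    have hν2 : surv ν b ≤ surv ν t := surv_anti ht.2
    have hμ1 : surv μ t ≤ surv μ a := surv_anti ht.1.le
    have hμ2 : surv μ b ≤ surv μ t := surv_anti ht.2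
    rw [abs_le]
    constructor <;> unfold E <;> linarith
  calc ∫⁻ t in Ioc a b, ENNReal.ofReal |cdf ν t - cdf μ t|
      ≤ ∫⁻ _ in Ioc a b, ENNReal.ofReal E := by
        refine setLIntegral_mono measurable_const hpt
    _ = ENNReal.ofReal E * volume (Ioc a b) := setLIntegral_const _ _
    _ = ENNReal.ofReal ((b - a) * E) := by
        rw [Real.volume_Ioc, ← ENNReal.ofReal_mul hE0, mul_comm]


end twomeasures
end auxE

section auxE2
open Finset in
lemma fin_telescope {m : ℕ} (g : Fin (m+1) → ℝ) :
    ∑ i : Fin m, (g i.castSucc - g i.succ) = g 0 - g (Fin.last m) := by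
  set G : ℕ → ℝ := fun j => if h : j < m + 1 then g ⟨j, h⟩ else g (Fin.last m) with hG
  have h1 : ∀ i : Fin m, g i.castSucc - g i.succ = G i.val - G (i.val + 1) := by
    intro i
    have hv : (i.val : ℕ) < m + 1 := Nat.lt_succ_of_lt i.isLt
    have hv' : i.val + 1 < m + 1 := Nat.succ_lt_succ i.isLt
    rw [hG]
    simp only [hv, hv', dif_pos]
    congr 1
  have h2 : ∑ i : Fin m, (g i.castSucc - g i.succ) = ∑ i : Fin m, (G i.val - G (i.val + 1)) :=
    Finset.sum_congr rfl fun i _ => h1 i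
  have hG0 : G 0 = g 0 := by rw [hG]; simp only [Nat.succ_pos, dif_pos]; rfl
  have hGm : G m = g (Fin.last m) := by
    rw [hG]; simp only [Nat.lt_succ_self, dif_pos]; rfl
  rw [h2, Fin.sum_univ_eq_sum_range (fun j => G j - G (j + 1)) m, Finset.sum_range_sub' G m,
    hG0, hGm]

lemma union_cells {m : ℕ} {K : Fin (m+1) → ℝ} (hK : Monotone K) :
    Ioc (K 0) (K (Fin.last m)) = ⋃ i : Fin m, Ioc (K i.castSucc) (K i.succ) := by
  apply Subset.antisymm
  · intro t ht
    classical
    set s : Finset (Fin (m+1)) := Finset.univ.filter (fun j => K j < t) with hs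
    have h0 : (0 : Fin (m+1)) ∈ s := by simp [hs, ht.1]
    have hne : s.Nonempty := ⟨0, h0⟩
    set j := s.max' hne with hj
    have hjmem : K j < t := by
      have := s.max'_mem hne
      simp only [hs, Finset.mem_filter] at this
      exact this.2
    have hjlt : (j : ℕ) < m := by
      rcases lt_or_eq_of_le (Fin.le_last j) with h | h
      · exact h
      · exfalso; rw [h] at hjmem; exact absurd ht.2 (not_le.2 hjmem)
    set i : Fin m := ⟨j, hjlt⟩ with hi
    have hcast : i.castSucc = j := by simp [hi, Fin.castSucc_mk]
    have hsucc : t ≤ K i.succ := by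
      by_contra hc
      push_neg at hc
      have hmem : i.succ ∈ s := by simp [hs, hc]
      have hle : i.succ ≤ j := s.le_max' _ hmem
      have : (j : ℕ) < (i.succ : ℕ) := by simp [hi, Fin.val_succ, Nat.lt_succ_self]
      exact absurd hle (not_le.2 (by exact this))
    exact mem_iUnion.2 ⟨i, by rw [hcast]; exact ⟨hjmem, hsucc⟩⟩
  · refine iUnion_subset fun i => Ioc_subset_Ioc (hK (Fin.zero_le _)) (hK (Fin.le_last _))

lemma mesh_nonneg {m : ℕ} {K : Fin (m+1) → ℝ} (hK : StrictMono K) :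
    0 ≤ ⨆ i : Fin m, (K i.succ - K i.castSucc) := by
  cases isEmpty_or_nonempty (Fin m) with
  | inl h => rw [Real.iSup_of_isEmpty]
  | inr h =>
    have hbdd : BddAbove (Set.range fun i : Fin m => K i.succ - K i.castSucc) :=
      Set.Finite.bddAbove (Set.finite_range _)
    have i := Classical.arbitrary (Fin m)
    exact le_trans (sub_pos.2 (hK (Fin.castSucc_lt_succ (i := i)))).le (le_ciSup hbdd i)

section master
variable (ν μ : Measure ℝ) [IsProbabilityMeasure ν] [IsProbabilityMeasure μ]

lemma lint_middle (hiν : Integrable (fun x : ℝ => x) ν) (hiμ : Integrable (fun x : ℝ => x) μ)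
    {m : ℕ} {K : Fin (m+1) → ℝ} (hK : StrictMono K)
    (hcall : ∀ i, callPrice ν (K i) = callPrice μ (K i)) :
    ∫⁻ t in Ioc (K 0) (K (Fin.last m)), ENNReal.ofReal |cdf ν t - cdf μ t| ≤
      ENNReal.ofReal (2 * ⨆ i : Fin m, (K i.succ - K i.castSucc)) := by
  rcases Nat.eq_zero_or_pos m with hm | hm
  · subst hm
    have : Fin.last 0 = (0 : Fin 1) := rfl
    rw [this, Ioc_self, Measure.restrict_empty, lintegral_zero_measure]
    exact zero_le
  · have : Nonempty (Fin m) := ⟨⟨0, hm⟩⟩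
    set Δ := ⨆ i : Fin m, (K i.succ - K i.castSucc) with hΔ
    have hbdd : BddAbove (Set.range fun i : Fin m => K i.succ - K i.castSucc) :=
      Set.Finite.bddAbove (Set.finite_range _)
    have hΔw : ∀ i : Fin m, K i.succ - K i.castSucc ≤ Δ := fun i => le_ciSup hbdd i
    have hw0 : ∀ i : Fin m, (0:ℝ) < K i.succ - K i.castSucc := fun i =>
      sub_pos.2 (hK (Fin.castSucc_lt_succ (i := i)))
    have hΔ0 : 0 ≤ Δ := le_trans (hw0 (Classical.arbitrary _)).le (hΔw _)
    have key : ∀ i j : Fin m, i < j →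
        Disjoint (Ioc (K i.castSucc) (K i.succ)) (Ioc (K j.castSucc) (K j.succ)) := by
      intro i j hlt
      have hle : K i.succ ≤ K j.castSucc := hK.monotone (by
        show (i.succ : Fin (m+1)) ≤ j.castSucc
        rw [Fin.le_def]
        simpa [Fin.val_succ] using hlt)
      refine Set.disjoint_left.2 fun t h1 h2 => ?_
      exact absurd h2.1 (not_lt.2 (h1.2.trans hle))
    have hdisj : Pairwise (Function.onFun Disjoint fun i : Fin m => Ioc (K i.castSucc) (K i.succ)) := by
      intro i j hij
      rcases hij.lt_or_gt with hlt | hlt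
      · exact key i j hlt
      · exact (key j i hlt).symm
    have hmeas : ∀ i : Fin m, MeasurableSet (Ioc (K i.castSucc) (K i.succ)) :=
      fun i => measurableSet_Ioc
    rw [union_cells hK.monotone, lintegral_iUnion hmeas hdisj, tsum_fintype]
    set E : Fin m → ℝ := fun i => (surv ν (K i.castSucc) - surv ν (K i.succ))
      + (surv μ (K i.castSucc) - surv μ (K i.succ)) with hE
    have hE0 : ∀ i, 0 ≤ E i := by
      intro i
      have h1 := surv_anti (ρ := ν) (hK (Fin.castSucc_lt_succ (i := i))).le
      have h2 := surv_anti (ρ := μ) (hK (Fin.castSucc_lt_succ (i := i))).le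
      simp only [hE]; linarith
    have hcellbd : ∀ i : Fin m,
        ∫⁻ t in Ioc (K i.castSucc) (K i.succ), ENNReal.ofReal |cdf ν t - cdf μ t| ≤
          ENNReal.ofReal (Δ * E i) := by
      intro i
      have hc := cell_eq ν μ hiν hiμ (hK (Fin.castSucc_lt_succ (i := i))).le
        (hcall i.castSucc) (hcall i.succ)
      refine le_trans (lint_cell ν μ (hK (Fin.castSucc_lt_succ (i := i))) hc) ?_
      apply ENNReal.ofReal_le_ofReal
      exact mul_le_mul_of_nonneg_right (hΔw i) (hE0 i)
    calc ∑ i : Fin m, ∫⁻ t in Ioc (K i.castSucc) (K i.succ), ENNReal.ofReal |cdf ν t - cdf μ t|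
        ≤ ∑ i : Fin m, ENNReal.ofReal (Δ * E i) := Finset.sum_le_sum fun i _ => hcellbd i
      _ = ENNReal.ofReal (∑ i : Fin m, Δ * E i) := by
          rw [ENNReal.ofReal_sum_of_nonneg]
          intro i _
          exact mul_nonneg hΔ0 (hE0 i)
      _ ≤ ENNReal.ofReal (2 * Δ) := by
          apply ENNReal.ofReal_le_ofReal
          rw [← Finset.mul_sum]
          have hsum : ∑ i : Fin m, E i = (surv ν (K 0) - surv ν (K (Fin.last m)))
              + (surv μ (K 0) - surv μ (K (Fin.last m))) := by
            rw [hE, Finset.sum_add_distrib, fin_telescope (fun j => surv ν (K j)),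
              fin_telescope (fun j => surv μ (K j))]
          have hb : ∑ i : Fin m, E i ≤ 2 := by
            rw [hsum]
            have := surv_le_one (ρ := ν) (K 0)
            have := surv_nonneg (ρ := ν) (K (Fin.last m))
            have := surv_le_one (ρ := μ) (K 0)
            have := surv_nonneg (ρ := μ) (K (Fin.last m))
            linarith
          calc Δ * ∑ i : Fin m, E i ≤ Δ * 2 := mul_le_mul_of_nonneg_left hb hΔ0
            _ = 2 * Δ := mul_comm _ _

lemma lint_total (hiν : Integrable (fun x : ℝ => x) ν) (hiμ : Integrable (fun x : ℝ => x) μ)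
    (hmean : ∫ x, x ∂ν = ∫ x, x ∂μ)
    {m : ℕ} {K : Fin (m+1) → ℝ} (hK : StrictMono K)
    (hcall : ∀ i, callPrice ν (K i) = callPrice μ (K i)) :
    ∫⁻ t, ENNReal.ofReal |cdf ν t - cdf μ t| ≤
      ENNReal.ofReal (2 * (⨆ i : Fin m, (K i.succ - K i.castSucc))
        + 2 * putPrice μ (K 0) + 2 * callPrice μ (K (Fin.last m))) := by
  have hKL : K 0 ≤ K (Fin.last m) := hK.monotone (Fin.zero_le _)
  have hsplit : ∫⁻ t, ENNReal.ofReal |cdf ν t - cdf μ t| =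
      (∫⁻ t in Iic (K 0), ENNReal.ofReal |cdf ν t - cdf μ t|)
      + ((∫⁻ t in Ioc (K 0) (K (Fin.last m)), ENNReal.ofReal |cdf ν t - cdf μ t|)
        + (∫⁻ t in Ioi (K (Fin.last m)), ENNReal.ofReal |cdf ν t - cdf μ t|)) := by
    rw [← lintegral_union measurableSet_Ioi (Ioc_disjoint_Ioi le_rfl),
      Ioc_union_Ioi_eq_Ioi hKL, ← lintegral_union measurableSet_Ioi
        (Iic_disjoint_Ioi le_rfl), Iic_union_Ioi, setLIntegral_univ]
  have hput : putPrice ν (K 0) = putPrice μ (K 0) := by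
    rw [put_call_parity hiν, put_call_parity hiμ, hcall 0, hmean]
  have t1 := lint_tail_left ν μ hiν hiμ (K 0)
  have t2 := lint_middle ν μ hiν hiμ hK hcall
  have t3 := lint_tail_right ν μ hiν hiμ (K (Fin.last m))
  rw [hput] at t1
  have hc : callPrice ν (K (Fin.last m)) = callPrice μ (K (Fin.last m)) := hcall _
  rw [hc] at t3
  rw [hsplit]
  have e1 : ENNReal.ofReal (putPrice μ (K 0)) + ENNReal.ofReal (putPrice μ (K 0))
      = ENNReal.ofReal (2 * putPrice μ (K 0)) := by
    rw [← ENNReal.ofReal_add (putPrice_nonneg _) (putPrice_nonneg _)]; ring_nf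
  have e3 : ENNReal.ofReal (callPrice μ (K (Fin.last m)))
      + ENNReal.ofReal (callPrice μ (K (Fin.last m)))
      = ENNReal.ofReal (2 * callPrice μ (K (Fin.last m))) := by
    rw [← ENNReal.ofReal_add (callPrice_nonneg _) (callPrice_nonneg _)]; ring_nf
  calc (∫⁻ t in Iic (K 0), ENNReal.ofReal |cdf ν t - cdf μ t|)
      + ((∫⁻ t in Ioc (K 0) (K (Fin.last m)), ENNReal.ofReal |cdf ν t - cdf μ t|)
        + (∫⁻ t in Ioi (K (Fin.last m)), ENNReal.ofReal |cdf ν t - cdf μ t|))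
      ≤ ENNReal.ofReal (2 * putPrice μ (K 0))
        + (ENNReal.ofReal (2 * (⨆ i : Fin m, (K i.succ - K i.castSucc)))
          + ENNReal.ofReal (2 * callPrice μ (K (Fin.last m)))) := by
        refine add_le_add (le_trans t1 e1.le) (add_le_add t2 (le_trans t3 e3.le))
    _ = ENNReal.ofReal (2 * (⨆ i : Fin m, (K i.succ - K i.castSucc))
        + 2 * putPrice μ (K 0) + 2 * callPrice μ (K (Fin.last m))) := by
        have hΔ0 : 0 ≤ (⨆ i : Fin m, (K i.succ - K i.castSucc)) := mesh_nonneg hK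
        have hre : 2 * (⨆ i : Fin m, (K i.succ - K i.castSucc))
            + 2 * putPrice μ (K 0) + 2 * callPrice μ (K (Fin.last m))
            = 2 * putPrice μ (K 0) + (2 * (⨆ i : Fin m, (K i.succ - K i.castSucc))
              + 2 * callPrice μ (K (Fin.last m))) := by ring
        rw [hre, ENNReal.ofReal_add (by linarith [putPrice_nonneg (ρ := μ) (K 0)])
          (by linarith [callPrice_nonneg (ρ := μ) (K (Fin.last m))]),
          ENNReal.ofReal_add (by linarith) (by linarith [callPrice_nonneg (ρ := μ) (K (Fin.last m))])]

end master
end auxE2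

section auxF
variable {ρ μ : Measure ℝ}
/-! ### support lemmas -/

lemma msupport_compl_null (μ : Measure ℝ) : μ (msupport μ)ᶜ = 0 := by
  apply measure_null_of_locally_null
  intro x hx
  simp only [msupport, mem_compl_iff, mem_setOf_eq, not_forall] at hx
  obtain ⟨ε, hε, hμε⟩ := hx
  refine ⟨Ioo (x - ε) (x + ε), ?_, ?_⟩
  · exact mem_nhdsWithin_of_mem_nhds (Ioo_mem_nhds (by linarith) (by linarith))
  · exact le_antisymm (le_of_not_gt hμε) (zero_le)

lemma msupport_null_lt {a : ℝ} (ha : suppInf μ = (a : EReal)) : μ {x : ℝ | x < a} = 0 := by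
  refine measure_mono_null (fun x hx => ?_) (msupport_compl_null μ)
  intro hmem
  have h1 : suppInf μ ≤ ((x : ℝ) : EReal) := sInf_le ⟨x, hmem, rfl⟩
  rw [ha, EReal.coe_le_coe_iff] at h1
  exact absurd hx (not_lt.2 h1)

lemma msupport_null_gt {b : ℝ} (hb : suppSup μ = (b : EReal)) : μ {x : ℝ | b < x} = 0 := by
  refine measure_mono_null (fun x hx => ?_) (msupport_compl_null μ)
  intro hmem
  have h1 : ((x : ℝ) : EReal) ≤ suppSup μ := le_sSup ⟨x, hmem, rfl⟩
  rw [hb, EReal.coe_le_coe_iff] at h1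
  exact absurd hx (not_lt.2 h1)

lemma putPrice_zero {a : ℝ} (ha : suppInf μ = (a : EReal)) : putPrice μ a = 0 := by
  have h0 : (fun x => max (a - x) 0) =ᵐ[μ] (fun _ => (0:ℝ)) := by
    have := compl_mem_ae_iff.2 (msupport_null_lt ha)
    filter_upwards [this] with x hx
    simp only [mem_compl_iff, mem_setOf_eq, not_lt] at hx
    rw [max_eq_right (by linarith)]
  rw [putPrice, integral_congr_ae h0, integral_const, smul_zero]

lemma callPrice_zero {b : ℝ} (hb : suppSup μ = (b : EReal)) : callPrice μ b = 0 := by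
  have h0 : (fun x => max (x - b) 0) =ᵐ[μ] (fun _ => (0:ℝ)) := by
    have := compl_mem_ae_iff.2 (msupport_null_gt hb)
    filter_upwards [this] with x hx
    simp only [mem_compl_iff, mem_setOf_eq, not_lt] at hx
    rw [max_eq_right (by linarith)]
  rw [callPrice, integral_congr_ae h0, integral_const, smul_zero]

/-! ### monotonicity and Lipschitz bounds -/

lemma putPrice_mono [IsProbabilityMeasure ρ] (h : Integrable (fun x : ℝ => x) ρ)
    {K K' : ℝ} (hKK : K ≤ K') : putPrice ρ K ≤ putPrice ρ K' := by
  refine integral_mono (integrable_put h K) (integrable_put h K') fun x => ?_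
  exact max_le_max (by linarith) le_rfl

lemma callPrice_anti [IsProbabilityMeasure ρ] (h : Integrable (fun x : ℝ => x) ρ)
    {K K' : ℝ} (hKK : K ≤ K') : callPrice ρ K' ≤ callPrice ρ K := by
  refine integral_mono (integrable_call h K') (integrable_call h K) fun x => ?_
  exact max_le_max (by linarith) le_rfl

lemma putPrice_lip [IsProbabilityMeasure ρ] (h : Integrable (fun x : ℝ => x) ρ) (K K' : ℝ) :
    |putPrice ρ K - putPrice ρ K'| ≤ |K - K'| := by
  rw [putPrice, putPrice, ← integral_sub (integrable_put h K) (integrable_put h K')]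
  rw [← Real.norm_eq_abs (∫ _, _ ∂ρ)]
  refine le_trans (norm_integral_le_integral_norm _) ?_
  have : ∫ x, ‖max (K - x) 0 - max (K' - x) 0‖ ∂ρ ≤ ∫ _, |K - K'| ∂ρ := by
    refine integral_mono ?_ (integrable_const _) fun x => ?_
    · exact ((integrable_put h K).sub (integrable_put h K')).norm
    · rw [Real.norm_eq_abs]
      calc |max (K - x) 0 - max (K' - x) 0| ≤ |(K - x) - (K' - x)| :=
            abs_max_sub_max_le_abs _ _ _
        _ = |K - K'| := by ring_nf
  simpa using this

lemma callPrice_lip [IsProbabilityMeasure ρ] (h : Integrable (fun x : ℝ => x) ρ) (K K' : ℝ) :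
    |callPrice ρ K - callPrice ρ K'| ≤ |K - K'| := by
  rw [callPrice, callPrice, ← integral_sub (integrable_call h K) (integrable_call h K')]
  rw [← Real.norm_eq_abs (∫ _, _ ∂ρ)]
  refine le_trans (norm_integral_le_integral_norm _) ?_
  have : ∫ x, ‖max (x - K) 0 - max (x - K') 0‖ ∂ρ ≤ ∫ _, |K - K'| ∂ρ := by
    refine integral_mono ?_ (integrable_const _) fun x => ?_
    · exact ((integrable_call h K).sub (integrable_call h K')).norm
    · rw [Real.norm_eq_abs]
      calc |max (x - K) 0 - max (x - K') 0| ≤ |(x - K) - (x - K')| :=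
            abs_max_sub_max_le_abs _ _ _
        _ = |K - K'| := by rw [show (x - K) - (x - K') = K' - K by ring, abs_sub_comm]
  simpa using this

lemma callPrice_tendsto_zero_atTop [IsProbabilityMeasure ρ]
    (h : Integrable (fun x : ℝ => x) ρ) :
    Tendsto (fun j : ℕ => callPrice ρ (j : ℝ)) atTop (nhds 0) := by
  have hlim : ∀ x : ℝ, Tendsto (fun j : ℕ => max (x - (j:ℝ)) 0) atTop (nhds 0) := by
    intro x
    refine tendsto_const_nhds.congr' ?_
    filter_upwards [eventually_ge_atTop (Nat.ceil x)] with j hj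
    have hx : x ≤ (j:ℝ) := le_trans (Nat.le_ceil x) (by exact_mod_cast hj)
    rw [max_eq_right (by linarith)]
  have hbound : ∀ j : ℕ, ∀ᵐ x ∂ρ, ‖max (x - (j:ℝ)) 0‖ ≤ max (x - 0) 0 := by
    intro j
    refine Filter.Eventually.of_forall fun x => ?_
    rw [Real.norm_eq_abs, abs_of_nonneg (le_max_right _ _)]
    have : (0:ℝ) ≤ (j:ℝ) := Nat.cast_nonneg j
    exact max_le_max (by linarith) le_rfl
  have := tendsto_integral_of_dominated_convergence (fun x => max (x - 0) 0)
    (fun j => (integrable_call h (j:ℝ)).aestronglyMeasurable)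
    (integrable_call h 0) hbound
    (Filter.Eventually.of_forall fun x => hlim x)
  simpa [callPrice] using this

lemma putPrice_tendsto_zero_atBot [IsProbabilityMeasure ρ]
    (h : Integrable (fun x : ℝ => x) ρ) :
    Tendsto (fun j : ℕ => putPrice ρ (-(j : ℝ))) atTop (nhds 0) := by
  have hlim : ∀ x : ℝ, Tendsto (fun j : ℕ => max (-(j:ℝ) - x) 0) atTop (nhds 0) := by
    intro x
    refine tendsto_const_nhds.congr' ?_
    filter_upwards [eventually_ge_atTop (Nat.ceil (-x))] with j hj
    have hx : -x ≤ (j:ℝ) := le_trans (Nat.le_ceil (-x)) (by exact_mod_cast hj)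
    rw [max_eq_right (by linarith)]
  have hbound : ∀ j : ℕ, ∀ᵐ x ∂ρ, ‖max (-(j:ℝ) - x) 0‖ ≤ max (0 - x) 0 := by
    intro j
    refine Filter.Eventually.of_forall fun x => ?_
    rw [Real.norm_eq_abs, abs_of_nonneg (le_max_right _ _)]
    have : (0:ℝ) ≤ (j:ℝ) := Nat.cast_nonneg j
    exact max_le_max (by linarith) le_rfl
  have := tendsto_integral_of_dominated_convergence (fun x => max (0 - x) 0)
    (fun j => (integrable_put h (-(j:ℝ))).aestronglyMeasurable)
    (integrable_put h 0) hbound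
    (Filter.Eventually.of_forall fun x => hlim x)
  simpa [putPrice] using this


lemma ereal_cases (x : EReal) : x = ⊥ ∨ x = ⊤ ∨ ∃ a : ℝ, x = (a : EReal) := by
  induction x using EReal.rec with
  | bot => exact Or.inl rfl
  | coe a => exact Or.inr (Or.inr ⟨a, rfl⟩)
  | top => exact Or.inr (Or.inl rfl)

lemma tendsto_put_suppInf [IsProbabilityMeasure μ] (hmom : Integrable (fun x : ℝ => x) μ)
    {K0 : ℕ → ℝ} (hlow : ∀ n, suppInf μ < ((K0 n : ℝ) : EReal))
    (h : Tendsto (fun n => ((K0 n : ℝ) : EReal)) atTop (nhds (suppInf μ))) :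
    Tendsto (fun n => putPrice μ (K0 n)) atTop (nhds 0) := by
  rcases ereal_cases (suppInf μ) with hbot | htop | ⟨a, ha⟩
  · rw [hbot] at h
    rw [NormedAddCommGroup.tendsto_nhds_zero]
    intro ε hε
    obtain ⟨j, hj⟩ := ((putPrice_tendsto_zero_atBot hmom).eventually_lt_const hε).exists
    have hev : ∀ᶠ n in atTop, ((K0 n : ℝ) : EReal) < ((-(j:ℝ) : ℝ) : EReal) :=
      EReal.tendsto_nhds_bot_iff_real.1 h _
    filter_upwards [hev] with n hn
    rw [EReal.coe_lt_coe_iff] at hn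
    rw [Real.norm_eq_abs, abs_of_nonneg (putPrice_nonneg _)]
    exact lt_of_le_of_lt (putPrice_mono hmom hn.le) hj
  · rw [htop] at hlow
    exact absurd (hlow 0) (not_lt.2 le_top)
  · rw [ha] at h
    have hreal : Tendsto K0 atTop (nhds a) := EReal.tendsto_coe.1 h
    have hupper : Tendsto (fun n => |K0 n - a|) atTop (nhds 0) := by
      have h1 : Tendsto (fun n => K0 n - a) atTop (nhds 0) := by
        simpa using hreal.sub_const a
      simpa using h1.abs
    refine tendsto_of_tendsto_of_tendsto_of_le_of_le tendsto_const_nhds hupper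
      (fun n => putPrice_nonneg _) (fun n => ?_)
    have hlip := putPrice_lip hmom (K0 n) a
    rw [putPrice_zero ha] at hlip
    calc putPrice μ (K0 n) ≤ |putPrice μ (K0 n) - 0| := by
          rw [sub_zero, abs_of_nonneg (putPrice_nonneg _)]
      _ ≤ |K0 n - a| := by simpa using hlip

lemma tendsto_call_suppSup [IsProbabilityMeasure μ] (hmom : Integrable (fun x : ℝ => x) μ)
    {KL : ℕ → ℝ} (hhigh : ∀ n, ((KL n : ℝ) : EReal) < suppSup μ)
    (h : Tendsto (fun n => ((KL n : ℝ) : EReal)) atTop (nhds (suppSup μ))) :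
    Tendsto (fun n => callPrice μ (KL n)) atTop (nhds 0) := by
  rcases ereal_cases (suppSup μ) with hbot | htop | ⟨b, hb⟩
  · rw [hbot] at hhigh
    exact absurd (hhigh 0) (not_lt.2 bot_le)
  · rw [htop] at h
    rw [NormedAddCommGroup.tendsto_nhds_zero]
    intro ε hε
    obtain ⟨j, hj⟩ := ((callPrice_tendsto_zero_atTop hmom).eventually_lt_const hε).exists
    have hev : ∀ᶠ n in atTop, (((j:ℝ) : ℝ) : EReal) < ((KL n : ℝ) : EReal) :=
      EReal.tendsto_nhds_top_iff_real.1 h _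
    filter_upwards [hev] with n hn
    rw [EReal.coe_lt_coe_iff] at hn
    rw [Real.norm_eq_abs, abs_of_nonneg (callPrice_nonneg _)]
    exact lt_of_le_of_lt (callPrice_anti hmom hn.le) hj
  · rw [hb] at h
    have hreal : Tendsto KL atTop (nhds b) := EReal.tendsto_coe.1 h
    have hupper : Tendsto (fun n => |KL n - b|) atTop (nhds 0) := by
      have h1 : Tendsto (fun n => KL n - b) atTop (nhds 0) := by
        simpa using hreal.sub_const b
      simpa using h1.abs
    refine tendsto_of_tendsto_of_tendsto_of_le_of_le tendsto_const_nhds hupper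
      (fun n => callPrice_nonneg _) (fun n => ?_)
    have hlip := callPrice_lip hmom (KL n) b
    rw [callPrice_zero hb] at hlip
    calc callPrice μ (KL n) ≤ |callPrice μ (KL n) - 0| := by
          rw [sub_zero, abs_of_nonneg (callPrice_nonneg _)]
      _ ≤ |KL n - b| := by simpa using hlip


end auxF

lemma W1R_nonneg (ν μ : Measure ℝ) : 0 ≤ W1R ν μ := by
  refine Real.sInf_nonneg fun r hr => ?_
  obtain ⟨γ, _, _, _, _, h⟩ := hr
  rw [h]
  exact integral_nonneg fun p => abs_nonneg _

/-- Proposition: stability under finitely many quoted call options.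
If `μⁿ` has the same mean as `μ` and the same call prices at the strikes
`Kⁿ_0 < … < Kⁿ_{mₙ}` lying strictly between the support bounds of `μ`, then
`(1/2)𝒲₁(μⁿ,μ) ≤ Δ𝐊ⁿ + Kⁿ_0 − λ + C_μ(Kⁿ_0) + C_μ(Kⁿ_{mₙ})`; in particular, if the mesh
tends to `0` and the extreme strikes tend to the support bounds, then `𝒲₁(μⁿ,μ) → 0`. -/
theorem finite_strikes_stability (μ : Measure ℝ)
    (hμ : IsProbabilityMeasure μ) (hmom : Integrable (fun x : ℝ => x) μ)
    (m : ℕ → ℕ) (K : ∀ n, Fin (m n + 1) → ℝ)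
    (hK : ∀ n, StrictMono (K n))
    (hlow : ∀ n, suppInf μ < ((K n 0 : ℝ) : EReal))
    (hhigh : ∀ n, ((K n (Fin.last (m n)) : ℝ) : EReal) < suppSup μ)
    (μn : ℕ → Measure ℝ)
    (hμn : ∀ n, IsProbabilityMeasure (μn n))
    (hmomn : ∀ n, Integrable (fun x : ℝ => x) (μn n))
    (hmean : ∀ n, ∫ x, x ∂(μn n) = ∫ x, x ∂μ)
    (hcall : ∀ n i, callPrice (μn n) (K n i) = callPrice μ (K n i)) :
    (∀ n, (1 / 2) * W1R (μn n) μ ≤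
      (⨆ i : Fin (m n), (K n i.succ - K n i.castSucc)) + K n 0 - (∫ x, x ∂μ)
        + callPrice μ (K n 0) + callPrice μ (K n (Fin.last (m n)))) ∧
    (Tendsto (fun n => ⨆ i : Fin (m n), (K n i.succ - K n i.castSucc)) atTop (nhds 0) →
      Tendsto (fun n => ((K n 0 : ℝ) : EReal)) atTop (nhds (suppInf μ)) →
      Tendsto (fun n => ((K n (Fin.last (m n)) : ℝ) : EReal)) atTop (nhds (suppSup μ)) →
      Tendsto (fun n => W1R (μn n) μ) atTop (nhds 0)) := by
  haveI := hμ
  have key : ∀ n, W1R (μn n) μ ≤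
      2 * (⨆ i : Fin (m n), (K n i.succ - K n i.castSucc))
      + 2 * putPrice μ (K n 0) + 2 * callPrice μ (K n (Fin.last (m n))) := by
    intro n
    haveI := hμn n
    refine W1R_le (μn n) μ ?_ ?_
    · have h1 := mesh_nonneg (hK n)
      have h2 := putPrice_nonneg (ρ := μ) (K n 0)
      have h3 := callPrice_nonneg (ρ := μ) (K n (Fin.last (m n)))
      linarith
    · exact lint_total (μn n) μ (hmomn n) hmom (hmean n) (hK n) (hcall n)
  constructor
  · intro n
    have hpar := put_call_parity hmom (K n 0)
    have hk := key n
    linarith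
  · intro hD hK0 hKL
    have hput := tendsto_put_suppInf hmom hlow hK0
    have hcal := tendsto_call_suppSup hmom hhigh hKL
    have hg : Tendsto (fun n => 2 * (⨆ i : Fin (m n), (K n i.succ - K n i.castSucc))
        + 2 * putPrice μ (K n 0) + 2 * callPrice μ (K n (Fin.last (m n)))) atTop (nhds 0) := by
      have := ((hD.const_mul 2).add (hput.const_mul 2)).add (hcal.const_mul 2)
      simpa using this
    exact tendsto_of_tendsto_of_tendsto_of_le_of_le tendsto_const_nhds hg
      (fun n => W1R_nonneg _ _) (fun n => key n)

end MMOT
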